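/- With respect to the symmetric bilinear form on P defined by ⟨φ_E, φ_F⟩ = δ_{E,F} t^{-inv(E)}, each operator T_i (1 ≤ i < N) is self-adjoint: ⟨T_i f, g⟩ = ⟨f, T_i g⟩ for all f, g ∈ P. -/

import Mathlib

open Finset

noncomputable section

/-- The space of "fermionic" polynomials: formal linear combinations of
monomials `φ_E = θ_{i₁}⋯θ_{i_m}` indexed by finite sets `E` of indices. -/
abbrev SP (K : Type) [Field K] := Finset ℕ →₀ K

variable {K : Type} [Field K]

/-- basis monomial φ_E -/
def phi (K : Type) [Field K] (E : Finset ℕ) : SP K := Finsupp.single E 1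

/-- linear operator determined by its values on the basis {φ_E} -/
def opOf (v : Finset ℕ → SP K) : SP K →ₗ[K] SP K :=
  Finsupp.lsum K fun E => LinearMap.toSpanSingleton K (SP K) (v E)

/-- the image s_i E of E under the transposition swapping i, i+1 -/
def swapSet (i : ℕ) (E : Finset ℕ) : Finset ℕ := E.image (Equiv.swap i (i + 1))

/-- the Hecke algebra operator T_i acting on anti-commuting variables -/
def heckeT (t : K) (i : ℕ) : SP K →ₗ[K] SP K :=
  opOf fun E =>
    if i ∈ E then
      (if i + 1 ∈ E then -phi K E else phi K (swapSet i E))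
    else
      (if i + 1 ∈ E then (t - 1) • phi K E + t • phi K (swapSet i E)
       else t • phi K E)

/-- inv(E) = #{(i,j) ∈ E × E^C : i < j}, complement taken inside {1,…,N} -/
def invE (N : ℕ) (E : Finset ℕ) : ℕ :=
  ((E ×ˢ (Finset.Icc 1 N \ E)).filter fun p => p.1 < p.2).card

/-- the symmetric bilinear form ⟨φ_E, φ_F⟩ = δ_{E,F} t^{-inv(E)} -/
def sform (t : K) (N : ℕ) (f g : SP K) : K :=
  f.sum fun E c => c * g E * t⁻¹ ^ invE N E

/- ===== auxiliary lemmas ===== -/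

lemma mem_swapSet {i x : ℕ} {E : Finset ℕ} :
    x ∈ swapSet i E ↔ Equiv.swap i (i+1) x ∈ E := by
  simp only [swapSet, Finset.mem_image]
  constructor
  · rintro ⟨a, ha, rfl⟩; simpa [Equiv.swap_apply_self] using ha
  · intro h; exact ⟨_, h, Equiv.swap_apply_self _ _ _⟩

lemma swapSet_swapSet {i : ℕ} {E : Finset ℕ} : swapSet i (swapSet i E) = E := by
  ext x; simp [mem_swapSet, Equiv.swap_apply_self]

lemma mem_swapSet_left {i : ℕ} {E : Finset ℕ} : i ∈ swapSet i E ↔ i + 1 ∈ E := by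
  simp [mem_swapSet]

lemma mem_swapSet_right {i : ℕ} {E : Finset ℕ} : i + 1 ∈ swapSet i E ↔ i ∈ E := by
  simp [mem_swapSet]

lemma invE_swap {N i : ℕ} (h1 : 1 ≤ i) (h2 : i < N) {E : Finset ℕ}
    (hi : i ∈ E) (hi1 : i + 1 ∉ E) :
    invE N E = invE N (swapSet i E) + 1 := by
  classical
  set σ := Equiv.swap i (i+1) with hσ
  set τ : ℕ × ℕ → ℕ × ℕ := fun p => (σ p.1, σ p.2) with hτ
  have hτinj : Function.Injective τ := fun p q h => by
    simp only [hτ, Prod.mk.injEq] at h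
    exact Prod.ext (σ.injective h.1) (σ.injective h.2)
  set E' := swapSet i E with hE'
  have hmemE' : ∀ x, x ∈ E' ↔ σ x ∈ E := fun x => mem_swapSet
  have hIcc : ∀ x, σ x ∈ Finset.Icc 1 N ↔ x ∈ Finset.Icc 1 N := by
    intro x
    rcases eq_or_ne x i with rfl | hxi
    · simp [hσ, mem_Icc]; omega
    rcases eq_or_ne x (i+1) with rfl | hxi1
    · simp [hσ, mem_Icc]; omega
    · rw [hσ, Equiv.swap_apply_of_ne_of_ne hxi hxi1]
  have hkey : ((E ×ˢ (Finset.Icc 1 N \ E)).filter fun p => p.1 < p.2)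
      = insert (i, i+1) (((E' ×ˢ (Finset.Icc 1 N \ E')).filter fun p => p.1 < p.2).image τ) := by
    ext ⟨a, b⟩
    have himg : (a, b) ∈ ((E' ×ˢ (Finset.Icc 1 N \ E')).filter fun p => p.1 < p.2).image τ
        ↔ (σ a ∈ E' ∧ σ b ∈ Finset.Icc 1 N \ E') ∧ σ a < σ b := by
      constructor
      · rintro h
        simp only [Finset.mem_image] at h
        obtain ⟨⟨c, d⟩, hcd, hcd2⟩ := h
        simp only [hτ, Prod.mk.injEq] at hcd2
        obtain ⟨rfl, rfl⟩ := hcd2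
        simpa [hσ, Equiv.swap_apply_self] using (Finset.mem_filter.mp hcd |>.imp (fun h => Finset.mem_product.mp h) id)
      · intro h
        refine Finset.mem_image.mpr ⟨(σ a, σ b), Finset.mem_filter.mpr ⟨Finset.mem_product.mpr h.1, h.2⟩, ?_⟩
        simp [hτ, hσ, Equiv.swap_apply_self]
    simp only [Finset.mem_insert, Finset.mem_filter, Finset.mem_product, Finset.mem_sdiff, himg,
      hmemE', hIcc, Prod.mk.injEq]
    have hσself : ∀ x, σ (σ x) = x := fun x => Equiv.swap_apply_self _ _ _
    simp only [hσself]
    constructor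
    · rintro ⟨⟨ha, hbIcc, hb⟩, hab⟩
      by_cases hab' : a = i ∧ b = i + 1
      · exact Or.inl hab'
      refine Or.inr ⟨⟨ha, hbIcc, hb⟩, ?_⟩
      have hbi : b ≠ i := fun h => hb (h ▸ hi)
      have hai1 : a ≠ i + 1 := fun h => hi1 (h ▸ ha)
      rcases eq_or_ne a i with hai' | hai
      · have hb1 : b ≠ i + 1 := fun h => hab' ⟨hai', h⟩
        rw [hai', hσ, Equiv.swap_apply_left, Equiv.swap_apply_of_ne_of_ne hbi hb1]
        omega
      · rw [hσ, Equiv.swap_apply_of_ne_of_ne hai hai1]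
        rcases eq_or_ne b (i+1) with hb1' | hb1
        · subst hb1'
          rw [Equiv.swap_apply_right]; omega
        · rw [Equiv.swap_apply_of_ne_of_ne hbi hb1]; exact hab
    · rintro (⟨rfl, rfl⟩ | ⟨⟨ha, hbIcc, hb⟩, hab⟩)
      · refine ⟨⟨hi, ?_, hi1⟩, by omega⟩
        simp [mem_Icc]; omega
      · refine ⟨⟨ha, hbIcc, hb⟩, ?_⟩
        have hbi : b ≠ i := fun h => hb (h ▸ hi)
        have hai1 : a ≠ i + 1 := fun h => hi1 (h ▸ ha)
        rcases eq_or_ne a i with hai' | hai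
        · rcases eq_or_ne b (i+1) with hb1' | hb1
          · omega
          · rw [hai', hσ, Equiv.swap_apply_left, Equiv.swap_apply_of_ne_of_ne hbi hb1] at hab
            omega
        · rw [hσ, Equiv.swap_apply_of_ne_of_ne hai hai1] at hab
          rcases eq_or_ne b (i+1) with hb1' | hb1
          · subst hb1'
            rw [Equiv.swap_apply_right] at hab; omega
          · rwa [Equiv.swap_apply_of_ne_of_ne hbi hb1] at hab
  have hnotmem : (i, i+1) ∉ ((E' ×ˢ (Finset.Icc 1 N \ E')).filter fun p => p.1 < p.2).image τ := by
    intro h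
    simp only [Finset.mem_image] at h
    obtain ⟨⟨c, d⟩, hcd, hcd2⟩ := h
    simp only [hτ, Prod.mk.injEq] at hcd2
    have hc : c = σ i := by rw [← hcd2.1, Equiv.swap_apply_self]
    have hd : d = σ (i+1) := by rw [← hcd2.2, Equiv.swap_apply_self]
    rw [hσ, Equiv.swap_apply_left] at hc
    rw [hσ, Equiv.swap_apply_right] at hd
    subst hc hd
    have := (Finset.mem_filter.mp hcd).2
    omega
  rw [invE, invE, hkey, Finset.card_insert_of_notMem hnotmem, Finset.card_image_of_injective _ hτinj]

lemma heckeT_phi (t : K) (i : ℕ) (E : Finset ℕ) :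
    heckeT t i (phi K E) =
      if i ∈ E then
        (if i + 1 ∈ E then -phi K E else phi K (swapSet i E))
      else
        (if i + 1 ∈ E then (t - 1) • phi K E + t • phi K (swapSet i E)
         else t • phi K E) := by
  rw [heckeT, opOf, phi, Finsupp.lsum_apply, Finsupp.sum_single_index (by simp)]
  simp only [LinearMap.toSpanSingleton_apply, one_smul]
  simp [phi]

lemma sform_phi_left (t : K) (N : ℕ) (E : Finset ℕ) (g : SP K) :
    sform t N (phi K E) g = g E * t⁻¹ ^ invE N E := by
  rw [sform, phi, Finsupp.sum_single_index (by simp)]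
  ring

lemma sform_phi_phi (t : K) (N : ℕ) (E F : Finset ℕ) :
    sform t N (phi K E) (phi K F) = if E = F then t⁻¹ ^ invE N E else 0 := by
  rw [sform_phi_left, phi, Finsupp.single_apply]
  by_cases h : E = F
  · simp [h, eq_comm]
  · simp [h, Ne.symm h]

lemma sform_zero_left (t : K) (N : ℕ) (g : SP K) : sform t N 0 g = 0 := by
  simp [sform]

lemma sform_zero_right (t : K) (N : ℕ) (f : SP K) : sform t N f 0 = 0 := by
  simp [sform]

lemma sform_add_left (t : K) (N : ℕ) (f f' g : SP K) :
    sform t N (f + f') g = sform t N f g + sform t N f' g := by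
  rw [sform, sform, sform, Finsupp.sum_add_index (by simp) (by intros; ring)]

lemma sform_smul_left (t : K) (N : ℕ) (c : K) (f g : SP K) :
    sform t N (c • f) g = c * sform t N f g := by
  rw [sform, sform, Finsupp.sum_smul_index (by simp), Finsupp.mul_sum]
  exact Finsupp.sum_congr fun E _ => by ring

lemma sform_neg_left (t : K) (N : ℕ) (f g : SP K) :
    sform t N (-f) g = -sform t N f g := by
  rw [show -f = (-1 : K) • f by simp, sform_smul_left]; ring

lemma sform_add_right (t : K) (N : ℕ) (f g g' : SP K) :
    sform t N f (g + g') = sform t N f g + sform t N f g' := by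
  rw [sform, sform, sform, ← Finsupp.sum_add]
  exact Finsupp.sum_congr fun E _ => by simp; ring

lemma sform_smul_right (t : K) (N : ℕ) (c : K) (f g : SP K) :
    sform t N f (c • g) = c * sform t N f g := by
  rw [sform, sform, Finsupp.mul_sum]
  exact Finsupp.sum_congr fun E _ => by simp; ring

lemma sform_neg_right (t : K) (N : ℕ) (f g : SP K) :
    sform t N f (-g) = -sform t N f g := by
  rw [show -g = (-1 : K) • g by simp, sform_smul_right]; ring

lemma sform_finset_sum_left (t : K) (N : ℕ) {ι : Type*} (s : Finset ι)
    (u : ι → SP K) (g : SP K) :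
    sform t N (∑ x ∈ s, u x) g = ∑ x ∈ s, sform t N (u x) g := by
  classical
  induction s using Finset.induction_on with
  | empty => simp [sform_zero_left]
  | insert a s' hx ih =>
                    rw [Finset.sum_insert hx, Finset.sum_insert hx, sform_add_left, ih]

lemma sform_finset_sum_right (t : K) (N : ℕ) {ι : Type*} (s : Finset ι)
    (u : ι → SP K) (f : SP K) :
    sform t N f (∑ x ∈ s, u x) = ∑ x ∈ s, sform t N f (u x) := by
  classical
  induction s using Finset.induction_on with
  | empty => simp [sform_zero_right]
  | insert a s' hx ih =>
                    rw [Finset.sum_insert hx, Finset.sum_insert hx, sform_add_right, ih]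

lemma single_eq_smul_phi (E : Finset ℕ) (c : K) :
    Finsupp.single E c = c • phi K E := by
  simp [phi, Finsupp.smul_single]

lemma map_eq_sum_phi (T : SP K →ₗ[K] SP K) (f : SP K) :
    T f = ∑ E ∈ f.support, f E • T (phi K E) := by
  conv_lhs => rw [← Finsupp.sum_single f, Finsupp.sum]
  rw [map_sum]
  exact Finset.sum_congr rfl fun E _ => by rw [single_eq_smul_phi, map_smul]

lemma core_lemma (t : K) (ht : t ≠ 0) {N i : ℕ} (h1 : 1 ≤ i) (h2 : i < N)
    (E F : Finset ℕ) :
    sform t N (heckeT t i (phi K E)) (phi K F)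
      = sform t N (phi K E) (heckeT t i (phi K F)) := by
  have hti : t * t⁻¹ = 1 := mul_inv_cancel₀ ht
  rw [heckeT_phi, heckeT_phi]
  by_cases hiE : i ∈ E <;> by_cases hi1E : i+1 ∈ E <;>
    by_cases hiF : i ∈ F <;> by_cases hi1F : i+1 ∈ F <;>
  simp only [hiE, hi1E, hiF, hi1F, if_true, if_false,
    sform_add_left, sform_add_right, sform_smul_left, sform_smul_right,
    sform_neg_left, sform_neg_right, sform_phi_phi]
  -- 14 goals remain (TTTT and FFFF closed by simp)
  · -- TTTF : A,B
    have hA : E ≠ F := by rintro rfl; exact hi1F hi1E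
    have hB : E ≠ swapSet i F := fun h => hi1F (mem_swapSet_left.mp (by rw [← h]; exact hiE))
    simp [hA, hB]
  · -- TTFT : A,C
    have hA : E ≠ F := by rintro rfl; exact hiF hiE
    have hB : E ≠ swapSet i F := fun h => hiF (mem_swapSet_right.mp (by rw [← h]; exact hi1E))
    simp [hA, hB]
  · -- TTFF : A,D
    have hA : E ≠ F := by rintro rfl; exact hiF hiE
    simp [hA]
  · -- TFTT : B,A
    have hA : E ≠ F := by rintro rfl; exact hi1E hi1F
    have hB : swapSet i E ≠ F := fun h => hi1E (mem_swapSet_left.mp (by rw [h]; exact hiF))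
    simp [hA, hB]
  · -- TFTF : B,B
    have hA : swapSet i E ≠ F := fun h => hi1E (mem_swapSet_left.mp (by rw [h]; exact hiF))
    have hB : E ≠ swapSet i F := fun h => hi1E (by rw [h]; exact mem_swapSet_right.mpr hiF)
    simp [hA, hB]
  · -- TFFT : B,C  (interesting)
    have hA : E ≠ F := by rintro rfl; exact hiF hiE
    by_cases hs : swapSet i E = F
    · have hs2 : E = swapSet i F := by rw [← hs, swapSet_swapSet]
      rw [if_pos hs, if_neg hA, if_pos hs2, invE_swap h1 h2 hiE hi1E, pow_succ]
      field_simp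
      ring
    · have hs2 : E ≠ swapSet i F := fun hh => hs (by rw [hh, swapSet_swapSet])
      rw [if_neg hs, if_neg hA, if_neg hs2]
      ring
  · -- TFFF : B,D
    have hA : E ≠ F := by rintro rfl; exact hiF hiE
    have hB : swapSet i E ≠ F := fun h => hi1F (by rw [← h]; exact mem_swapSet_right.mpr hiE)
    simp [hA, hB]
  · -- FTTT : C,A
    have hA : E ≠ F := by rintro rfl; exact hiE hiF
    have hB : swapSet i E ≠ F := fun h => hiE (mem_swapSet_right.mp (by rw [h]; exact hi1F))
    simp [hA, hB]
  · -- FTTF : C,B  (interesting)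
    have hA : E ≠ F := by rintro rfl; exact hiE hiF
    by_cases hs : swapSet i E = F
    · have hs2 : E = swapSet i F := by rw [← hs, swapSet_swapSet]
      rw [if_neg hA, if_pos hs, if_pos hs2, hs, hs2, invE_swap h1 h2 hiF hi1F, pow_succ]
      field_simp
      ring
    · have hs2 : E ≠ swapSet i F := fun hh => hs (by rw [hh, swapSet_swapSet])
      rw [if_neg hA, if_neg hs, if_neg hs2]
      ring
  · -- FTFT : C,C
    have hA : swapSet i E ≠ F := fun h => hiF (by rw [← h]; exact mem_swapSet_left.mpr hi1E)
    have hB : E ≠ swapSet i F := fun h => hiE (by rw [h]; exact mem_swapSet_left.mpr hi1F)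
    simp [hA, hB]
  · -- FTFF : C,D
    have hA : E ≠ F := by rintro rfl; exact hi1F hi1E
    have hB : swapSet i E ≠ F := fun h => hiF (by rw [← h]; exact mem_swapSet_left.mpr hi1E)
    simp [hA, hB]
  · -- FFTT : D,A
    have hA : E ≠ F := by rintro rfl; exact hiE hiF
    simp [hA]
  · -- FFTF : D,B
    have hA : E ≠ F := by rintro rfl; exact hiE hiF
    have hB : E ≠ swapSet i F := fun h => hi1E (by rw [h]; exact mem_swapSet_right.mpr hiF)
    simp [hA, hB]
  · -- FFFT : D,C
    have hA : E ≠ F := by rintro rfl; exact hi1E hi1F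
    have hB : E ≠ swapSet i F := fun h => hiE (by rw [h]; exact mem_swapSet_left.mpr hi1F)
    simp [hA, hB]

lemma eq_sum_phi (f : SP K) : f = ∑ E ∈ f.support, f E • phi K E := by
  conv_lhs => rw [← Finsupp.sum_single f, Finsupp.sum]
  exact Finset.sum_congr rfl fun E _ => single_eq_smul_phi E (f E)

/-- each `T_i` (1 ≤ i < N) is self-adjoint for the form
`⟨φ_E, φ_F⟩ = δ_{E,F} t^{-inv(E)}` on P = span{φ_E : E ⊆ {1,…,N}}. -/
theorem heckeT_selfAdjoint (K : Type) [Field K] (t : K) (ht : t ≠ 0) (N i : ℕ)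
    (h1 : 1 ≤ i) (h2 : i < N) (f g : SP K)
    (hf : ∀ E ∈ f.support, E ⊆ Finset.Icc 1 N)
    (hg : ∀ E ∈ g.support, E ⊆ Finset.Icc 1 N) :
    sform t N (heckeT t i f) g = sform t N f (heckeT t i g) := by
  calc sform t N (heckeT t i f) g
      = ∑ E ∈ f.support, ∑ F ∈ g.support,
          f E * (g F * sform t N (heckeT t i (phi K E)) (phi K F)) := by
        rw [map_eq_sum_phi (heckeT t i) f, sform_finset_sum_left]
        refine Finset.sum_congr rfl fun E _ => ?_
        rw [sform_smul_left]
        conv_lhs => rw [eq_sum_phi g]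
        rw [sform_finset_sum_right, Finset.mul_sum]
        exact Finset.sum_congr rfl fun F _ => by rw [sform_smul_right]
    _ = ∑ E ∈ f.support, ∑ F ∈ g.support,
          f E * (g F * sform t N (phi K E) (heckeT t i (phi K F))) := by
        refine Finset.sum_congr rfl fun E _ => Finset.sum_congr rfl fun F _ => ?_
        rw [core_lemma t ht h1 h2 E F]
    _ = sform t N f (heckeT t i g) := by
        symm
        conv_lhs => rw [eq_sum_phi f]
        rw [sform_finset_sum_left]
        refine Finset.sum_congr rfl fun E _ => ?_
        rw [sform_smul_left, map_eq_sum_phi (heckeT t i) g, sform_finset_sum_right,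
          Finset.mul_sum]
        exact Finset.sum_congr rfl fun F _ => by rw [sform_smul_right]
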